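/- Let a < b < c be positive real numbers, let k ≥ 2, and let x₀ < x₁ < ⋯ < x_k be real numbers such that x₁ − x₀ = a, x_i − x_{i−1} = b for all 1 < i < k, and x_k − x_{k−1} = c. Then there exists a finite convex set C ⊂ ℝ with |C| = k + 1 which contains the four points x₀, x₁, x_{k−1}, and x_k. -/

import Mathlib

/-- A finite set `A ⊆ ℝ` is *convex* if, listing its elements in increasing order,
the consecutive differences form a strictly increasing sequence. -/
def IsConvexSet (A : Finset ℝ) : Prop :=
  ∀ i : ℕ, i + 2 < A.card →
    (A.sort (· ≤ ·)).getD (i + 1) 0 - (A.sort (· ≤ ·)).getD i 0 <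
      (A.sort (· ≤ ·)).getD (i + 2) 0 - (A.sort (· ≤ ·)).getD (i + 1) 0

/-- If `x₀ < x₁ < ⋯ < x_k` have gaps `a, b, …, b, c` with `0 < a < b < c`, then there is a
convex set of size `k + 1` containing `x₀`, `x₁`, `x_{k−1}` and `x_k`. -/
theorem convexify_almost_AP (a b c : ℝ) (ha : 0 < a) (hab : a < b) (hbc : b < c)
    (k : ℕ) (hk : 2 ≤ k) (x : ℕ → ℝ)
    (hmono : ∀ i < k, x i < x (i + 1))
    (hfirst : x 1 - x 0 = a)
    (hmid : ∀ i, 1 < i → i < k → x i - x (i - 1) = b)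
    (hlast : x k - x (k - 1) = c) :
    ∃ C : Finset ℝ, IsConvexSet C ∧ C.card = k + 1 ∧
      x 0 ∈ C ∧ x 1 ∈ C ∧ x (k - 1) ∈ C ∧ x k ∈ C := by
  have hk0 : (0:ℝ) < k := by positivity
  set ε : ℝ := min (b - a) (c - b) / (2 * k) with hεdef
  have hmin : 0 < min (b - a) (c - b) := lt_min (by linarith) (by linarith)
  have hε : 0 < ε := by
    apply div_pos hmin; positivity
  have hεk : ε * (2 * k) = min (b - a) (c - b) := by
    rw [hεdef]; field_simp
  have hεk1 : ε * k < b - a := by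
    have h1 : min (b - a) (c - b) ≤ b - a := min_le_left _ _
    nlinarith
  have hεk2 : ε * k < c - b := by
    have h1 : min (b - a) (c - b) ≤ c - b := min_le_right _ _
    nlinarith
  set y : ℕ → ℝ := fun i => if i = 0 then x 0 else if i = k then x k
      else x 1 + ((i:ℝ) - 1) * b + ε * ((i:ℝ) - 1) * ((i:ℝ) + 1 - k) with hy
  -- closed form for middle x's
  have hx : ∀ i, 1 ≤ i → i ≤ k - 1 → x i = x 1 + ((i:ℝ) - 1) * b := by
    intro i hi1 hik
    induction i with
    | zero => omega
    | succ n ih =>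
      rcases Nat.eq_or_lt_of_le hi1 with h | h
      · simp [← h]
      · have hn : x (n+1) - x n = b := by
          have := hmid (n+1) (by omega) (by omega)
          simpa using this
        have := ih (by omega) (by omega)
        push_cast
        rw [show x (n+1) = x n + b by linarith, this]
        ring
  have habs : ∀ i : ℕ, 2 ≤ i → i ≤ k - 1 →
      a < b + ε * (2 * (i:ℝ) - k - 1) ∧ b + ε * (2 * (i:ℝ) - k - 1) < c := by
    intro i hi2 hik
    have hki : (i:ℝ) ≤ (k:ℝ) - 1 := by
      have : i ≤ k - 1 := hik
      have : (i:ℝ) ≤ ((k-1:ℕ):ℝ) := by exact_mod_cast this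
      rw [Nat.cast_sub (by omega)] at this
      simpa using this
    have hi2' : (2:ℝ) ≤ i := by exact_mod_cast hi2
    have h1 : -(k:ℝ) ≤ 2 * (i:ℝ) - k - 1 := by linarith
    have h2 : 2 * (i:ℝ) - k - 1 ≤ k := by linarith
    constructor
    · nlinarith
    · nlinarith
  -- gap facts
  have hy1 : y 1 = x 1 := by
    simp only [hy]
    rw [if_neg (by omega), if_neg (by omega)]
    push_cast; ring
  have g1 : y 1 - y 0 = a := by
    rw [hy1]; simp only [hy, if_pos rfl]; linarith
  have gmid : ∀ i : ℕ, 2 ≤ i → i ≤ k - 1 →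
      y i - y (i - 1) = b + ε * (2 * (i:ℝ) - k - 1) := by
    intro i hi2 hik
    have hyi : y i = x 1 + ((i:ℝ) - 1) * b + ε * ((i:ℝ) - 1) * ((i:ℝ) + 1 - k) := by
      simp only [hy]; rw [if_neg (by omega), if_neg (by omega)]
    have hyi1 : y (i-1) = x 1 + (((i:ℝ) - 1) - 1) * b
        + ε * (((i:ℝ) - 1) - 1) * (((i:ℝ) - 1) + 1 - k) := by
      simp only [hy]; rw [if_neg (by omega), if_neg (by omega)]
      have : ((i - 1 : ℕ):ℝ) = (i:ℝ) - 1 := by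
        rw [Nat.cast_sub (by omega)]; simp
      rw [this]
    rw [hyi, hyi1]; ring
  have hyk1 : y (k - 1) = x (k - 1) := by
    rcases Nat.eq_or_lt_of_le hk with h | h
    · rw [← h]; simpa using hy1
    · have h1 : y (k-1) = x 1 + (((k-1:ℕ):ℝ) - 1) * b
          + ε * (((k-1:ℕ):ℝ) - 1) * (((k-1:ℕ):ℝ) + 1 - k) := by
        simp only [hy]; rw [if_neg (by omega), if_neg (by omega)]
      have hc : ((k - 1 : ℕ):ℝ) = (k:ℝ) - 1 := by
        rw [Nat.cast_sub (by omega)]; simp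
      rw [h1, hc, hx (k-1) (by omega) (by omega), hc]
      ring
  have hyk : y k = x k := by
    simp only [hy]; rw [if_neg (by omega)]; simp
  have glast : y k - y (k - 1) = c := by rw [hyk, hyk1]; exact hlast
  -- the gaps are strictly increasing
  have hgaps : ∀ i : ℕ, i + 2 ≤ k → y (i + 1) - y i < y (i + 2) - y (i + 1) := by
    intro i hik
    rcases Nat.eq_zero_or_pos i with rfl | hi1
    · rcases Nat.eq_or_lt_of_le hik with h | h
      · -- k = 2
        have : y (0 + 2) - y (0 + 1) = c := by
          rw [show (0:ℕ)+2 = k from h.symm ▸ rfl, show (0:ℕ)+1 = k - 1 by omega]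
          exact glast
        rw [this, show (0:ℕ)+1 = 1 from rfl, g1]
        linarith
      · have h2 : y 2 - y 1 = b + ε * (2 * ((2:ℕ):ℝ) - k - 1) := by
          have := gmid 2 le_rfl (by omega)
          simpa using this
        have := (habs 2 le_rfl (by omega)).1
        simp only [show (0:ℕ)+1 = 1 from rfl, show (0:ℕ)+2 = 2 from rfl, g1, h2]
        exact_mod_cast this
    · rcases Nat.eq_or_lt_of_le hik with h | h
      · -- i + 2 = k : last gap
        have hL : y (i+1) - y i = b + ε * (2 * ((i+1:ℕ):ℝ) - k - 1) := by
          have := gmid (i+1) (by omega) (by omega)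
          simpa using this
        have hR : y (i+2) - y (i+1) = c := by
          rw [show i + 2 = k from h, show i + 1 = k - 1 by omega]
          exact glast
        rw [hL, hR]
        have := (habs (i+1) (by omega) (by omega)).2
        linarith
      · have hL : y (i+1) - y i = b + ε * (2 * ((i+1:ℕ):ℝ) - k - 1) := by
          have := gmid (i+1) (by omega) (by omega)
          simpa using this
        have hR : y (i+2) - y (i+1) = b + ε * (2 * ((i+2:ℕ):ℝ) - k - 1) := by
          have := gmid (i+2) (by omega) (by omega)
          simpa using this
        rw [hL, hR]
        push_cast
        nlinarith
  -- all gaps positive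
  have hpos : ∀ i, i < k → y i < y (i + 1) := by
    intro i hik
    rcases Nat.eq_zero_or_pos i with rfl | hi1
    · have : y 1 - y 0 = a := g1
      linarith
    · rcases Nat.eq_or_lt_of_le (Nat.succ_le_of_lt hik) with h | h
      · have : y k - y (k-1) = c := glast
        rw [show i = k - 1 by omega, show k - 1 + 1 = k by omega]
        linarith
      · have hg := gmid (i+1) (by omega) (by omega)
        simp only [Nat.add_sub_cancel] at hg
        have := (habs (i+1) (by omega) (by omega)).1
        have : (0:ℝ) < b + ε * (2 * ((i+1:ℕ):ℝ) - k - 1) := by linarith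
        linarith
  set L : List ℝ := (List.range (k+1)).map y with hL
  have hchain : List.IsChain (· < ·) L := by
    rw [hL, List.isChain_map]
    rw [List.isChain_range_succ]
    exact hpos
  have hsorted : L.Pairwise (· < ·) := List.isChain_iff_pairwise.mp hchain
  have hnodup : L.Nodup := hsorted.nodup
  have hsle : L.Pairwise (· ≤ ·) := hsorted.imp le_of_lt
  have hlen : L.length = k + 1 := by simp [hL]
  refine ⟨L.toFinset, ?_, ?_, ?_, ?_, ?_, ?_⟩
  · -- convexity
    have hsort : L.toFinset.sort (· ≤ ·) = L := (List.toFinset_sort (· ≤ ·) hnodup).mpr hsle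
    intro i hi
    rw [hsort]
    rw [List.toFinset_card_of_nodup hnodup, hlen] at hi
    have hget : ∀ j, j < k + 1 → L.getD j 0 = y j := by
      intro j hj
      rw [List.getD_eq_getElem _ _ (by rw [hlen]; omega)]
      simp [hL]
    rw [hget i (by omega), hget (i+1) (by omega), hget (i+2) (by omega)]
    exact hgaps i (by omega)
  · rw [List.toFinset_card_of_nodup hnodup, hlen]
  · have : y 0 ∈ L.toFinset := by
      rw [List.mem_toFinset, hL, List.mem_map]
      exact ⟨0, by simp, rfl⟩
    simpa [hy] using this
  · have : y 1 ∈ L.toFinset := by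
      rw [List.mem_toFinset, hL, List.mem_map]
      exact ⟨1, by simp [List.mem_range]; omega, rfl⟩
    rwa [hy1] at this
  · have : y (k-1) ∈ L.toFinset := by
      rw [List.mem_toFinset, hL, List.mem_map]
      exact ⟨k-1, by simp [List.mem_range], rfl⟩
    rwa [hyk1] at this
  · have : y k ∈ L.toFinset := by
      rw [List.mem_toFinset, hL, List.mem_map]
      exact ⟨k, by simp [List.mem_range], rfl⟩
    rwa [hyk] at this
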